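/- Let k be an algebraically closed field, A a finite-dimensional k-algebra, and t a Calabi–Yau family of traces on the finitely generated projective right A-modules; for a finitely generated projective R and y ∈ End_A(R) let τ_R(y)_P := Σ_i g^i ∘ y ∘ g_i ∈ End_A(P), computed from any dual bases (g_i) of Hom_A(P,R) and (g^i) of Hom_A(R,P). Then for all finitely generated projective right A-modules R, S and all A-linear maps a : S → R and b : R → S one has τ_R(a ∘ b)_P = τ_S(b ∘ a)_P for every finitely generated projective right A-module P. -/

import Mathlib

universe u

/-- A bundled finitely generated projective right `A`-module (with compatible `k`-action). -/
structure FGProj (k A : Type u) [Field k] [Ring A] [Algebra k A] : Type (u + 1) where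
  carrier : Type u
  [isAddCommGroup : AddCommGroup carrier]
  [isModuleK : Module k carrier]
  [isModuleA : Module Aᵐᵒᵖ carrier]
  [isTower : IsScalarTower k Aᵐᵒᵖ carrier]
  [isFinite : Module.Finite Aᵐᵒᵖ carrier]
  [isProjective : Module.Projective Aᵐᵒᵖ carrier]

attribute [instance] FGProj.isAddCommGroup FGProj.isModuleK FGProj.isModuleA
  FGProj.isTower FGProj.isFinite FGProj.isProjective

instance (k A : Type u) [Field k] [Ring A] [Algebra k A] : CoeSort (FGProj k A) (Type u) :=
  ⟨FGProj.carrier⟩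

/-- A Calabi–Yau family of traces on the finitely generated projective right `A`-modules. -/
structure CYTraces (k A : Type u) [Field k] [Ring A] [Algebra k A] : Type (u + 1) where
  t : ∀ P : FGProj k A, ((P : Type u) →ₗ[Aᵐᵒᵖ] P) →ₗ[k] k
  cyclic : ∀ (P Q : FGProj k A) (f : (P : Type u) →ₗ[Aᵐᵒᵖ] Q) (g : (Q : Type u) →ₗ[Aᵐᵒᵖ] P),
    t P (g ∘ₗ f) = t Q (f ∘ₗ g)
  nondeg_left : ∀ (P Q : FGProj k A) (f : (P : Type u) →ₗ[Aᵐᵒᵖ] Q), f ≠ 0 →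
    ∃ g : (Q : Type u) →ₗ[Aᵐᵒᵖ] P, t Q (f ∘ₗ g) ≠ 0
  nondeg_right : ∀ (P Q : FGProj k A) (g : (Q : Type u) →ₗ[Aᵐᵒᵖ] P), g ≠ 0 →
    ∃ f : (P : Type u) →ₗ[Aᵐᵒᵖ] Q, t Q (f ∘ₗ g) ≠ 0

open scoped Classical

private theorem sum_comp_aux {R₀ : Type*} [Semiring R₀] {ι M N Q : Type*}
    [AddCommMonoid M] [AddCommMonoid N] [AddCommMonoid Q]
    [Module R₀ M] [Module R₀ N] [Module R₀ Q]
    (s : Finset ι) (f : ι → (N →ₗ[R₀] Q)) (g : M →ₗ[R₀] N) :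
    (∑ i ∈ s, f i) ∘ₗ g = ∑ i ∈ s, f i ∘ₗ g := by
  ext x; simp

private theorem comp_sum_aux {R₀ : Type*} [Semiring R₀] {ι M N Q : Type*}
    [AddCommMonoid M] [AddCommMonoid N] [AddCommMonoid Q]
    [Module R₀ M] [Module R₀ N] [Module R₀ Q]
    (s : Finset ι) (g : N →ₗ[R₀] Q) (f : ι → (M →ₗ[R₀] N)) :
    g ∘ₗ (∑ i ∈ s, f i) = ∑ i ∈ s, g ∘ₗ f i := by
  ext x; simp

private theorem comp_smul_aux {R₀ k₀ : Type*} [Semiring R₀] [CommSemiring k₀] {M N Q : Type*}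
    [AddCommMonoid M] [AddCommMonoid N] [AddCommMonoid Q]
    [Module R₀ M] [Module R₀ N] [Module R₀ Q]
    [Module k₀ N] [Module k₀ Q] [SMulCommClass R₀ k₀ N] [SMulCommClass R₀ k₀ Q]
    [LinearMap.CompatibleSMul N Q k₀ R₀]
    (f : N →ₗ[R₀] Q) (c : k₀) (g : M →ₗ[R₀] N) :
    f ∘ₗ (c • g) = c • (f ∘ₗ g) := by
  ext x
  simp [LinearMap.map_smul_of_tower]

/-- For a Calabi–Yau family of traces `t` on the f.g. projective right
`A`-modules, the operation `τ` satisfies `τ_R(a ∘ b)_P = τ_S(b ∘ a)_P`: for all f.g.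
projectives `P, R, S`, maps `a : S → R`, `b : R → S`, and dual bases `(g, g')` for the pair
`(P, R)` and `(h, h')` for the pair `(P, S)` with respect to `t`, the corresponding sums
agree. -/
theorem tau_comm
    (k A : Type u) [Field k] [IsAlgClosed k] [Ring A] [Algebra k A] [FiniteDimensional k A]
    (t : CYTraces k A) (R S P : FGProj k A)
    (a : (S : Type u) →ₗ[Aᵐᵒᵖ] R) (b : (R : Type u) →ₗ[Aᵐᵒᵖ] S)
    (ι κ : Type u) [Fintype ι] [Fintype κ]
    (g : Module.Basis ι k ((P : Type u) →ₗ[Aᵐᵒᵖ] R)) (g' : Module.Basis ι k ((R : Type u) →ₗ[Aᵐᵒᵖ] P))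
    (hg : ∀ i j, t.t R (g j ∘ₗ g' i) = if i = j then 1 else 0)
    (h : Module.Basis κ k ((P : Type u) →ₗ[Aᵐᵒᵖ] S)) (h' : Module.Basis κ k ((S : Type u) →ₗ[Aᵐᵒᵖ] P))
    (hh : ∀ i j, t.t S (h j ∘ₗ h' i) = if i = j then 1 else 0) :
    ∑ i, g' i ∘ₗ (a ∘ₗ b) ∘ₗ g i = ∑ j, h' j ∘ₗ (b ∘ₗ a) ∘ₗ h j := by
  classical
  have keyS : ∀ x : (P : Type u) →ₗ[Aᵐᵒᵖ] S, x = ∑ j, t.t S (x ∘ₗ h' j) • h j := by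
    intro x
    have hx := h.sum_repr x
    conv_lhs => rw [← hx]
    refine Finset.sum_congr rfl fun j _ => ?_
    congr 1
    conv_rhs => rw [← hx]
    rw [sum_comp_aux, map_sum]
    simp [LinearMap.smul_comp, hh, eq_comm]
  have keyR : ∀ x : (R : Type u) →ₗ[Aᵐᵒᵖ] P, x = ∑ i, t.t R (g i ∘ₗ x) • g' i := by
    intro x
    have hx := g'.sum_repr x
    conv_lhs => rw [← hx]
    refine Finset.sum_congr rfl fun i _ => ?_
    congr 1
    conv_rhs => rw [← hx]
    rw [comp_sum_aux, map_sum]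
    simp [comp_smul_aux, hg]
  calc ∑ i, g' i ∘ₗ (a ∘ₗ b) ∘ₗ g i
      = ∑ i, ∑ j, t.t S ((b ∘ₗ g i) ∘ₗ h' j) • (g' i ∘ₗ a ∘ₗ h j) := by
        refine Finset.sum_congr rfl fun i _ => ?_
        simp only [LinearMap.comp_assoc]
        rw [keyS (b ∘ₗ g i), comp_sum_aux, comp_sum_aux]
        simp [comp_smul_aux, LinearMap.comp_assoc]
    _ = ∑ j, ∑ i, t.t R ((g i ∘ₗ h' j) ∘ₗ b) • (g' i ∘ₗ a ∘ₗ h j) := by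
        rw [Finset.sum_comm]
        refine Finset.sum_congr rfl fun j _ => Finset.sum_congr rfl fun i _ => ?_
        rw [LinearMap.comp_assoc, t.cyclic S R (g i ∘ₗ h' j) b]
    _ = ∑ j, h' j ∘ₗ (b ∘ₗ a) ∘ₗ h j := by
        refine Finset.sum_congr rfl fun j _ => ?_
        have e : h' j ∘ₗ (b ∘ₗ a) ∘ₗ h j = (h' j ∘ₗ b) ∘ₗ (a ∘ₗ h j) := by
          ext x; simp
        rw [e, keyR (h' j ∘ₗ b), sum_comp_aux]
        refine Finset.sum_congr rfl fun i _ => ?_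
        rw [LinearMap.smul_comp, LinearMap.comp_assoc]
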